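/- Let (ψ,A) solve ψ'' = ψ(β²ψ²+A²−1), A'' = rβ²ψ²A on [−m,M] with ψ'(−m)=ψ'(M)=0 and A'(−m)=A'(M)=h, where β,r>0. Then the quantity Q = (1/β²)∫_{−m}^{M}( ψ²(β²ψ²/2 − 1 + A²) + (ψ')² + (A'−h)²/(rβ²) ) dt satisfies Q = ∫_{−m}^{M}( r(∫_t^M ψ(s)²A(s) ds)² − ψ(t)⁴/2 ) dt. -/

import Mathlib

open Set intervalIntegral

/-- The rescaled energy Q reduces to
∫ ( r(∫_t^M ψ²A)² - ψ⁴/2 ) dt. -/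
theorem stmt_10 (m M h r β : ℝ) (hmM : -m < M) (hr : 0 < r) (hβ : 0 < β)
    (ψ A : ℝ → ℝ) (hψ : ContDiff ℝ 2 ψ) (hA : ContDiff ℝ 2 A)
    (hode1 : ∀ t ∈ Icc (-m) M,
      deriv (deriv ψ) t = ψ t * (β^2 * (ψ t)^2 + (A t)^2 - 1))
    (hode2 : ∀ t ∈ Icc (-m) M,
      deriv (deriv A) t = r * β^2 * (ψ t)^2 * A t)
    (hbcψ : deriv ψ (-m) = 0 ∧ deriv ψ M = 0)
    (hbcA : deriv A (-m) = h ∧ deriv A M = h) :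
    (1/β^2) * ∫ t in (-m)..M,
        ((ψ t)^2 * (β^2 * (ψ t)^2 / 2 - 1 + (A t)^2) + (deriv ψ t)^2
          + (deriv A t - h)^2 / (r * β^2))
      = ∫ t in (-m)..M,
        (r * (∫ s in t..M, (ψ s)^2 * A s)^2 - (ψ t)^4 / 2) := by
  have hm : (-m) ≤ M := le_of_lt hmM
  -- regularity facts
  have hψ2 : ContDiff ℝ ((1:ℕ∞)+1) ψ := by exact_mod_cast hψ
  rw [contDiff_succ_iff_deriv] at hψ2
  have hψd : Differentiable ℝ ψ := hψ2.1
  have hψ'd : Differentiable ℝ (deriv ψ) := hψ2.2.2.differentiable (by simp)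
  have hψ'c : Continuous (deriv ψ) := hψ'd.continuous
  have hψ''c : Continuous (deriv (deriv ψ)) := hψ2.2.2.continuous_deriv le_rfl
  have hA2 : ContDiff ℝ ((1:ℕ∞)+1) A := by exact_mod_cast hA
  rw [contDiff_succ_iff_deriv] at hA2
  have hAd : Differentiable ℝ A := hA2.1
  have hA'd : Differentiable ℝ (deriv A) := hA2.2.2.differentiable (by simp)
  have hA'c : Continuous (deriv A) := hA'd.continuous
  have hA''c : Continuous (deriv (deriv A)) := hA2.2.2.continuous_deriv le_rfl
  have hψc : Continuous ψ := hψd.continuous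
  have hAc : Continuous A := hAd.continuous
  have hβ2 : β^2 ≠ 0 := pow_ne_zero 2 hβ.ne'
  have hrne : r ≠ 0 := hr.ne'
  -- key identity for A
  have key : ∀ t ∈ Icc (-m) M,
      deriv A t - h = -(r*β^2) * ∫ s in t..M, (ψ s)^2 * A s := by
    intro t ht
    have htM : t ≤ M := ht.2
    have h1 : ∫ s in t..M, deriv (deriv A) s = deriv A M - deriv A t :=
      intervalIntegral.integral_eq_sub_of_hasDerivAt (a := t) (b := M)
        (fun x _ => (hA'd x).hasDerivAt)
        (hA''c.intervalIntegrable _ _)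
    have h2 : ∫ s in t..M, deriv (deriv A) s
        = r*β^2 * ∫ s in t..M, (ψ s)^2 * A s := by
      rw [← intervalIntegral.integral_const_mul]
      apply intervalIntegral.integral_congr
      intro s hs
      beta_reduce
      rw [uIcc_of_le htM] at hs
      have hsm : s ∈ Icc (-m) M := ⟨le_trans ht.1 hs.1, hs.2⟩
      rw [hode2 s hsm]; ring
    rw [hbcA.2] at h1
    have := h1.symm.trans h2
    linarith
  -- integrability facts
  have int1 : IntervalIntegrable
      (fun t => (1/β^2) * ((ψ t)^2 * (β^2 * (ψ t)^2 / 2 - 1 + (A t)^2) + (deriv ψ t)^2))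
      MeasureTheory.volume (-m) M := by
    apply Continuous.intervalIntegrable; fun_prop
  have int2 : IntervalIntegrable
      (fun t => (1/β^2) * ((deriv A t - h)^2 / (r * β^2)))
      MeasureTheory.volume (-m) M := by
    apply Continuous.intervalIntegrable; fun_prop
  have int3 : IntervalIntegrable (fun t => (ψ t)^4 / 2)
      MeasureTheory.volume (-m) M := by
    apply Continuous.intervalIntegrable; fun_prop
  -- integration by parts: ∫ (ψ')² + ψψ'' = 0
  have ibp : ∫ t in (-m)..M, (deriv ψ t * deriv ψ t + ψ t * deriv (deriv ψ) t)
      = 0 := by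
    have := intervalIntegral.integral_eq_sub_of_hasDerivAt (a := -m) (b := M)
      (f := fun t => ψ t * deriv ψ t)
      (f' := fun t => deriv ψ t * deriv ψ t + ψ t * deriv (deriv ψ) t)
      (fun x _ => (hψd x).hasDerivAt.mul (hψ'd x).hasDerivAt)
      (by apply Continuous.intervalIntegrable; fun_prop)
    rw [this]; beta_reduce; rw [hbcψ.1, hbcψ.2]; ring
  -- first part: ∫ (1/β²) g1 = - ∫ ψ⁴/2
  have part1 :
      ∫ t in (-m)..M, (1/β^2) * ((ψ t)^2 * (β^2 * (ψ t)^2 / 2 - 1 + (A t)^2) + (deriv ψ t)^2)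
      = - ∫ t in (-m)..M, (ψ t)^4 / 2 := by
    have eqn : ∫ t in (-m)..M,
        ((1/β^2) * ((ψ t)^2 * (β^2 * (ψ t)^2 / 2 - 1 + (A t)^2) + (deriv ψ t)^2)
          + (ψ t)^4 / 2)
        = ∫ t in (-m)..M,
        (1/β^2) * (deriv ψ t * deriv ψ t + ψ t * deriv (deriv ψ) t) := by
      apply intervalIntegral.integral_congr
      intro t ht
      beta_reduce
      rw [uIcc_of_le hm] at ht
      rw [hode1 t ht]
      field_simp
      ring
    rw [intervalIntegral.integral_add int1 int3, intervalIntegral.integral_const_mul,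
      intervalIntegral.integral_const_mul, ibp, mul_zero] at eqn
    rw [intervalIntegral.integral_const_mul]
    linarith
  -- second part: pointwise identity under the integral
  have part2 :
      ∫ t in (-m)..M, (1/β^2) * ((deriv A t - h)^2 / (r * β^2))
      = ∫ t in (-m)..M, r * (∫ s in t..M, (ψ s)^2 * A s)^2 := by
    apply intervalIntegral.integral_congr
    intro t ht
    beta_reduce
    rw [uIcc_of_le hm] at ht
    rw [key t ht]
    field_simp
  -- assemble
  rw [← intervalIntegral.integral_const_mul]
  have split : ∫ t in (-m)..M,
      (1/β^2) * ((ψ t)^2 * (β^2 * (ψ t)^2 / 2 - 1 + (A t)^2) + (deriv ψ t)^2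
        + (deriv A t - h)^2 / (r * β^2))
      = (∫ t in (-m)..M, (1/β^2) * ((ψ t)^2 * (β^2 * (ψ t)^2 / 2 - 1 + (A t)^2) + (deriv ψ t)^2))
      + ∫ t in (-m)..M, (1/β^2) * ((deriv A t - h)^2 / (r * β^2)) := by
    rw [← intervalIntegral.integral_add int1 int2]
    apply intervalIntegral.integral_congr
    intro t _; beta_reduce; ring
  rw [split, part1, part2]
  have rhs : ∫ t in (-m)..M,
      (r * (∫ s in t..M, (ψ s)^2 * A s)^2 - (ψ t)^4 / 2)
      = (∫ t in (-m)..M, r * (∫ s in t..M, (ψ s)^2 * A s)^2)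
        - ∫ t in (-m)..M, (ψ t)^4 / 2 := by
    apply intervalIntegral.integral_sub _ int3
    apply Continuous.intervalIntegrable
    apply Continuous.mul continuous_const
    apply Continuous.pow
    have : Continuous fun t => ∫ s in M..t, (ψ s)^2 * A s :=
      intervalIntegral.continuous_primitive
        (fun a b => ((hψc.pow 2).mul hAc).intervalIntegrable a b) M
    have h2 : Continuous fun t => -∫ s in M..t, (ψ s)^2 * A s := this.neg
    convert h2 using 1
    funext t
    rw [intervalIntegral.integral_symm]
  rw [rhs]
  ring
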